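/- For smooth functions φ, ψ on (0,∞)×ℝ², there is a universal constant C such that the null form Q₀(φ,ψ) = (∂ₜφ)(∂ₜψ) - ∇ₓφ·∇ₓψ satisfies |Q₀(φ,ψ)(t,x)| ≤ C⟨t+|x|⟩^{-1}([φ]₁|∂ψ| + |∂φ|[ψ]₁) for all t > 0 and x ∈ ℝ², where [φ]₁ = |φ|₁ + ⟨t-|x|⟩|∂φ| and |φ|₁ is the sum of |φ| and the absolute values of the derivatives of φ along L₁, L₂, Ω, ∂ₜ, ∂₁, ∂₂. -/

import Mathlib

set_option maxHeartbeats 1000000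


noncomputable section

def dT (φ : ℝ → ℝ → ℝ → ℝ) : ℝ → ℝ → ℝ → ℝ := fun t x1 x2 => deriv (fun s => φ s x1 x2) t
def d1 (φ : ℝ → ℝ → ℝ → ℝ) : ℝ → ℝ → ℝ → ℝ := fun t x1 x2 => deriv (fun s => φ t s x2) x1
def d2 (φ : ℝ → ℝ → ℝ → ℝ) : ℝ → ℝ → ℝ → ℝ := fun t x1 x2 => deriv (fun s => φ t x1 s) x2
def L1 (φ : ℝ → ℝ → ℝ → ℝ) : ℝ → ℝ → ℝ → ℝ := fun t x1 x2 => x1 * dT φ t x1 x2 + t * d1 φ t x1 x2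
def L2 (φ : ℝ → ℝ → ℝ → ℝ) : ℝ → ℝ → ℝ → ℝ := fun t x1 x2 => x2 * dT φ t x1 x2 + t * d2 φ t x1 x2
def Omg (φ : ℝ → ℝ → ℝ → ℝ) : ℝ → ℝ → ℝ → ℝ := fun t x1 x2 => x1 * d2 φ t x1 x2 - x2 * d1 φ t x1 x2
def rr (x1 x2 : ℝ) : ℝ := Real.sqrt (x1 ^ 2 + x2 ^ 2)
def jb (y : ℝ) : ℝ := Real.sqrt (1 + y ^ 2)
def gradNorm (φ : ℝ → ℝ → ℝ → ℝ) (t x1 x2 : ℝ) : ℝ :=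
  Real.sqrt (dT φ t x1 x2 ^ 2 + d1 φ t x1 x2 ^ 2 + d2 φ t x1 x2 ^ 2)
def norm1 (φ : ℝ → ℝ → ℝ → ℝ) (t x1 x2 : ℝ) : ℝ :=
  |φ t x1 x2| + |L1 φ t x1 x2| + |L2 φ t x1 x2| + |Omg φ t x1 x2|
    + |dT φ t x1 x2| + |d1 φ t x1 x2| + |d2 φ t x1 x2|
def bracket1 (φ : ℝ → ℝ → ℝ → ℝ) (t x1 x2 : ℝ) : ℝ :=
  norm1 φ t x1 x2 + jb (t - rr x1 x2) * gradNorm φ t x1 x2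
/-- null form Q₀(φ,ψ) = ∂ₜφ∂ₜψ - ∂₁φ∂₁ψ - ∂₂φ∂₂ψ -/
def Q0 (φ ψ : ℝ → ℝ → ℝ → ℝ) (t x1 x2 : ℝ) : ℝ :=
  dT φ t x1 x2 * dT ψ t x1 x2 - d1 φ t x1 x2 * d1 ψ t x1 x2 - d2 φ t x1 x2 * d2 ψ t x1 x2


lemma abs_le_of_sq' {x y : ℝ} (hy : 0 ≤ y) (h : x^2 ≤ y^2) : |x| ≤ y := by
  have := Real.sqrt_le_sqrt h
  rwa [Real.sqrt_sq_eq_abs, Real.sqrt_sq hy] at this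

lemma abs_mul_le' {x y X Y : ℝ} (hx : |x| ≤ X) (hy : |y| ≤ Y) : |x*y| ≤ X*Y := by
  rw [abs_mul]; exact mul_le_mul hx hy (abs_nonneg _) ((abs_nonneg _).trans hx)

lemma abs5 (a b c d e : ℝ) : |a - b - c + d + e| ≤ |a|+|b|+|c|+|d|+|e| := by
  have h1 := abs_add_le (a-b-c+d) e
  have h2 := abs_add_le (a-b-c) d
  have h3 := abs_sub (a-b) c
  have h4 := abs_sub a b
  linarith

lemma abs3 (a b c : ℝ) : |a + b - c| ≤ |a|+|b|+|c| := by
  have h1 := abs_sub (a+b) c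
  have h2 := abs_add_le a b
  linarith

lemma abs3' (a b c : ℝ) : |a + b + c| ≤ |a|+|b|+|c| := by
  have h1 := abs_add_le (a+b) c
  have h2 := abs_add_le a b
  linarith

lemma comp_le2 {x y r : ℝ} (hr2 : r^2 = x^2+y^2) (hr0 : 0 ≤ r) : |x| ≤ r :=
  abs_le_of_sq' hr0 (by nlinarith [sq_nonneg y])

lemma comp_le3 {x y z G : ℝ} (hG2 : G^2 = x^2+y^2+z^2) (hG0 : 0 ≤ G) : |x| ≤ G :=
  abs_le_of_sq' hG0 (by nlinarith [sq_nonneg y, sq_nonneg z])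

lemma cs_dot {x1 x2 b1 b2 a r G : ℝ} (hr2 : r^2 = x1^2+x2^2) (hr0 : 0 ≤ r)
    (hG2 : G^2 = a^2+b1^2+b2^2) (hG0 : 0 ≤ G) : |x1*b1+x2*b2| ≤ r*G :=
  abs_le_of_sq' (mul_nonneg hr0 hG0)
    (by nlinarith [sq_nonneg (x1*b2-x2*b1), sq_nonneg (x1*a), sq_nonneg (x2*a)])

lemma cs_wedge {x1 x2 b1 b2 a r G : ℝ} (hr2 : r^2 = x1^2+x2^2) (hr0 : 0 ≤ r)
    (hG2 : G^2 = a^2+b1^2+b2^2) (hG0 : 0 ≤ G) : |x1*b2-x2*b1| ≤ r*G :=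
  abs_le_of_sq' (mul_nonneg hr0 hG0)
    (by nlinarith [sq_nonneg (x1*b1+x2*b2), sq_nonneg (x1*a), sq_nonneg (x2*a)])

lemma cs_q {a b1 b2 A B1 B2 G G' : ℝ} (hG2 : G^2 = a^2+b1^2+b2^2) (hG0 : 0 ≤ G)
    (hG'2 : G'^2 = A^2+B1^2+B2^2) (hG'0 : 0 ≤ G') : |a*A - b1*B1 - b2*B2| ≤ G*G' :=
  abs_le_of_sq' (mul_nonneg hG0 hG'0)
    (by nlinarith [sq_nonneg (a*B1+b1*A), sq_nonneg (a*B2+b2*A), sq_nonneg (b1*B2-b2*B1)])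

lemma key (t x1 x2 a b1 b2 A B1 B2 r G G' J Jp Nf Ns : ℝ)
    (ht : 0 < t)
    (hr2 : r^2 = x1^2+x2^2) (hr0 : 0 ≤ r)
    (hG2 : G^2 = a^2+b1^2+b2^2) (hG0 : 0 ≤ G)
    (hG'2 : G'^2 = A^2+B1^2+B2^2) (hG'0 : 0 ≤ G')
    (hJ1 : 1 ≤ J) (hJtr : |t - r| ≤ J)
    (hJp1 : 1 ≤ Jp) (hJple : Jp ≤ 1 + (t+r))
    (hNf : Nf = |x1*a+t*b1| + |x2*a+t*b2| + |x1*b2-x2*b1| + J*G)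
    (hNs : Ns = |x1*A+t*B1| + |x2*A+t*B2| + |x1*B2-x2*B1| + J*G') :
    |a*A - b1*B1 - b2*B2| * Jp ≤ 100 * (Nf * G' + G * Ns) := by
  have hx1 : |x1| ≤ r := comp_le2 hr2 hr0
  have hx2 : |x2| ≤ r := comp_le2 (by linarith : r^2 = x2^2+x1^2) hr0
  have ha : |a| ≤ G := comp_le3 hG2 hG0
  have hB1 : |B1| ≤ G' := comp_le3 (by linarith : G'^2 = B1^2+A^2+B2^2) hG'0
  have hB2 : |B2| ≤ G' := comp_le3 (by linarith : G'^2 = B2^2+A^2+B1^2) hG'0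
  have hA : |A| ≤ G' := comp_le3 hG'2 hG'0
  have hxb : |x1*b1+x2*b2| ≤ r*G := cs_dot hr2 hr0 hG2 hG0
  have hxB : |x1*B1+x2*B2| ≤ r*G' := cs_dot hr2 hr0 hG'2 hG'0
  have hw : |x1*b2-x2*b1| ≤ r*G := cs_wedge hr2 hr0 hG2 hG0
  have hw' : |x1*B2-x2*B1| ≤ r*G' := cs_wedge hr2 hr0 hG'2 hG'0
  have hQ : |a*A - b1*B1 - b2*B2| ≤ G*G' := cs_q hG2 hG0 hG'2 hG'0
  have hJ0 : (0:ℝ) ≤ J := by linarith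
  have hJG : J*G ≤ Nf := by
    rw [hNf]; linarith [abs_nonneg (x1*a+t*b1), abs_nonneg (x2*a+t*b2), abs_nonneg (x1*b2-x2*b1)]
  have hJG' : J*G' ≤ Ns := by
    rw [hNs]; linarith [abs_nonneg (x1*A+t*B1), abs_nonneg (x2*A+t*B2), abs_nonneg (x1*B2-x2*B1)]
  have hGJG : G ≤ J*G := le_mul_of_one_le_left hG0 hJ1
  have hG'JG' : G' ≤ J*G' := le_mul_of_one_le_left hG'0 hJ1
  have hNf0 : G ≤ Nf := hGJG.trans hJG
  have hJGnn : (0:ℝ) ≤ J*G := mul_nonneg hJ0 hG0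
  have hJG'nn : (0:ℝ) ≤ J*G' := mul_nonneg hJ0 hG'0
  have hNfl1 : |x1*a+t*b1| ≤ Nf := by
    rw [hNf]; linarith [abs_nonneg (x2*a+t*b2), abs_nonneg (x1*b2-x2*b1)]
  have hNfl2 : |x2*a+t*b2| ≤ Nf := by
    rw [hNf]; linarith [abs_nonneg (x1*a+t*b1), abs_nonneg (x1*b2-x2*b1)]
  have hNsl1 : |x1*A+t*B1| ≤ Ns := by
    rw [hNs]; linarith [abs_nonneg (x2*A+t*B2), abs_nonneg (x1*B2-x2*B1)]
  have hNsl2 : |x2*A+t*B2| ≤ Ns := by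
    rw [hNs]; linarith [abs_nonneg (x1*A+t*B1), abs_nonneg (x1*B2-x2*B1)]
  have hNswp : |x1*B2-x2*B1| ≤ Ns := by
    rw [hNs]; linarith [abs_nonneg (x1*A+t*B1), abs_nonneg (x2*A+t*B2)]
  have hNs0 : 0 ≤ Ns := le_trans (abs_nonneg _) hNswp
  have hNf0' : 0 ≤ Nf := le_trans hG0 hNf0
  have hNfG' : (0:ℝ) ≤ Nf*G' := mul_nonneg hNf0' hG'0
  have hGNs : (0:ℝ) ≤ G*Ns := mul_nonneg hG0 hNs0
  rcases le_or_gt (t+r) 1 with hsm | hbig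
  · -- small region
    have hJp2 : Jp ≤ 2 := by linarith
    have h1 : |a*A - b1*B1 - b2*B2| * Jp ≤ (G*G')*2 :=
      mul_le_mul hQ hJp2 (by linarith) (mul_nonneg hG0 hG'0)
    have h2 : G*G' ≤ Nf*G' := mul_le_mul_of_nonneg_right hNf0 hG'0
    linarith
  rcases le_total r t with hrt | htr
  · -- interior region r ≤ t, t+r > 1 so t > 1/2
    have hJp4 : Jp ≤ 4*t := by linarith
    have htr0 : 0 ≤ t - r := by linarith
    have htrJ : t - r ≤ J := le_trans (le_abs_self _) hJtr
    set Q := a*A - b1*B1 - b2*B2 with hQdef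
    set l1 := x1*a+t*b1 with hl1; set l2 := x2*a+t*b2 with hl2
    set m1 := x1*A+t*B1 with hm1d; set m2 := x2*A+t*B2 with hm2d
    have hid : t^2 * Q = (t^2-r^2)*(a*A) - l1*m1 - l2*m2
        + x1*(a*m1 + A*l1) + x2*(a*m2 + A*l2) := by
      simp only [hQdef, hl1, hl2, hm1d, hm2d]; linear_combination (a*A) * hr2
    have hm1 : |m1| ≤ 2*t*G' := by
      calc |m1| ≤ |x1*A| + |t*B1| := abs_add_le _ _
        _ ≤ t*G' + t*G' := by
            refine add_le_add ?_ ?_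
            · rw [abs_mul]; exact mul_le_mul (hx1.trans hrt) hA (abs_nonneg _) ht.le
            · rw [abs_mul, abs_of_pos ht]; exact mul_le_mul_of_nonneg_left hB1 ht.le
        _ = 2*t*G' := by ring
    have hm2 : |m2| ≤ 2*t*G' := by
      calc |m2| ≤ |x2*A| + |t*B2| := abs_add_le _ _
        _ ≤ t*G' + t*G' := by
            refine add_le_add ?_ ?_
            · rw [abs_mul]; exact mul_le_mul (hx2.trans hrt) hA (abs_nonneg _) ht.le
            · rw [abs_mul, abs_of_pos ht]; exact mul_le_mul_of_nonneg_left hB2 ht.le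
        _ = 2*t*G' := by ring
    have hfac : t^2 - r^2 ≤ 2*t*J := by
      have h := mul_le_mul htrJ (show t+r ≤ 2*t by linarith) (by linarith) hJ0
      linarith [h]
    have hT1 : |(t^2-r^2)*(a*A)| ≤ (2*t*J)*(G*G') := by
      refine abs_mul_le' ?_ (abs_mul_le' ha hA)
      rw [abs_of_nonneg (by linarith [mul_le_mul hrt hrt hr0 (hr0.trans hrt)] : (0:ℝ) ≤ t^2-r^2)]
      exact hfac
    have hT2 : |l1*m1| ≤ Nf*(2*t*G') := abs_mul_le' hNfl1 hm1
    have hT3 : |l2*m2| ≤ Nf*(2*t*G') := abs_mul_le' hNfl2 hm2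
    have hT4 : |x1*(a*m1 + A*l1)| ≤ t*(G*Ns + G'*Nf) := by
      refine abs_mul_le' (hx1.trans hrt) ?_
      calc |a*m1 + A*l1| ≤ |a*m1| + |A*l1| := abs_add_le _ _
        _ ≤ G*Ns + G'*Nf := add_le_add (abs_mul_le' ha hNsl1) (abs_mul_le' hA hNfl1)
    have hT5 : |x2*(a*m2 + A*l2)| ≤ t*(G*Ns + G'*Nf) := by
      refine abs_mul_le' (hx2.trans hrt) ?_
      calc |a*m2 + A*l2| ≤ |a*m2| + |A*l2| := abs_add_le _ _
        _ ≤ G*Ns + G'*Nf := add_le_add (abs_mul_le' ha hNsl2) (abs_mul_le' hA hNfl2)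
    have hJGG' : (2*t*J)*(G*G') ≤ 2*t*(Nf*G') := by
      have h := mul_le_mul_of_nonneg_left (mul_le_mul_of_nonneg_right hJG hG'0)
        (show (0:ℝ) ≤ 2*t by linarith)
      linarith [h]
    have hE : t^2 * |Q| ≤ t*(8*(Nf*G') + 2*(G*Ns)) := by
      have h0 : t^2 * |Q| = |t^2 * Q| := by
        rw [abs_mul, abs_of_pos (pow_pos ht 2)]
      rw [h0, hid]
      have tri := abs5 ((t^2-r^2)*(a*A)) (l1*m1) (l2*m2) (x1*(a*m1 + A*l1)) (x2*(a*m2 + A*l2))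
      linarith [tri, hT1, hT2, hT3, hT4, hT5, hJGG']
    have h4t : |Q| * Jp ≤ |Q| * (4*t) := mul_le_mul_of_nonneg_left hJp4 (abs_nonneg _)
    have hQt : t*|Q| ≤ 8*(Nf*G') + 2*(G*Ns) := by
      have h := hE
      rw [show t^2*|Q| = t*(t*|Q|) by ring] at h
      exact le_of_mul_le_mul_left h ht
    linarith [h4t, hQt]
  · -- exterior region t ≤ r, t+r>1 so r > 1/2
    have hrpos : 0 < r := by linarith
    have hJp4 : Jp ≤ 4*r := by linarith
    have htr0 : 0 ≤ r - t := by linarith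
    have htrJ : r - t ≤ J := by linarith [neg_le_of_abs_le hJtr]
    set Q := a*A - b1*B1 - b2*B2 with hQdef
    set xb := x1*b1+x2*b2 with hxbdef
    set xB := x1*B1+x2*B2 with hxBdef
    set w := x1*b2-x2*b1 with hwdef
    set w' := x1*B2-x2*B1 with hw'def
    have hid : 2*(r^2 * Q) = (r*a + xb)*(r*A - xB) + (r*a - xb)*(r*A + xB) - 2*(w*w') := by
      simp only [hQdef, hxbdef, hxBdef, hwdef, hw'def]
      linear_combination (-2*(b1*B1+b2*B2)) * hr2
    have e1 : r*(r*a+xb) = x1*(x1*a+t*b1) + x2*(x2*a+t*b2) + (r-t)*xb := by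
      simp only [hxbdef]; linear_combination a * hr2
    have hgood : |r*a + xb| ≤ Nf := by
      have h5 : |r*(r*a+xb)| ≤ r*Nf := by
        rw [e1]
        calc |x1*(x1*a+t*b1) + x2*(x2*a+t*b2) + (r-t)*xb|
            ≤ |x1*(x1*a+t*b1)| + |x2*(x2*a+t*b2)| + |(r-t)*xb| :=
              abs3' _ _ _
          _ ≤ r*|x1*a+t*b1| + r*|x2*a+t*b2| + J*(r*G) := by
              refine add_le_add (add_le_add ?_ ?_) ?_
              · exact abs_mul_le' hx1 le_rfl
              · exact abs_mul_le' hx2 le_rfl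
              · refine abs_mul_le' ?_ hxb
                rw [abs_of_nonneg htr0]; exact htrJ
          _ ≤ r*Nf := by
              rw [hNf]
              have hrw : (0:ℝ) ≤ r*|x1*b2-x2*b1| := mul_nonneg hr0 (abs_nonneg _)
              linarith [hrw]
      rw [abs_mul, abs_of_pos hrpos] at h5
      exact le_of_mul_le_mul_left h5 hrpos
    have hgood' : |r*A + xB| ≤ Ns := by
      have e1' : r*(r*A+xB) = x1*(x1*A+t*B1) + x2*(x2*A+t*B2) + (r-t)*xB := by
        simp only [hxBdef]; linear_combination A * hr2
      have h5 : |r*(r*A+xB)| ≤ r*Ns := by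
        rw [e1']
        calc |x1*(x1*A+t*B1) + x2*(x2*A+t*B2) + (r-t)*xB|
            ≤ |x1*(x1*A+t*B1)| + |x2*(x2*A+t*B2)| + |(r-t)*xB| :=
              abs3' _ _ _
          _ ≤ r*|x1*A+t*B1| + r*|x2*A+t*B2| + J*(r*G') := by
              refine add_le_add (add_le_add ?_ ?_) ?_
              · exact abs_mul_le' hx1 le_rfl
              · exact abs_mul_le' hx2 le_rfl
              · refine abs_mul_le' ?_ hxB
                rw [abs_of_nonneg htr0]; exact htrJ
          _ ≤ r*Ns := by
              rw [hNs]
              have hrw : (0:ℝ) ≤ r*|x1*B2-x2*B1| := mul_nonneg hr0 (abs_nonneg _)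
              linarith [hrw]
      rw [abs_mul, abs_of_pos hrpos] at h5
      exact le_of_mul_le_mul_left h5 hrpos
    have hminus' : |r*A - xB| ≤ 2*(r*G') := by
      calc |r*A - xB| ≤ |r*A| + |xB| := abs_sub _ _
        _ ≤ r*G' + r*G' := add_le_add
            (by rw [abs_mul, abs_of_pos hrpos]; exact mul_le_mul_of_nonneg_left hA hr0) hxB
        _ = 2*(r*G') := by ring
    have hminus : |r*a - xb| ≤ 2*(r*G) := by
      calc |r*a - xb| ≤ |r*a| + |xb| := abs_sub _ _
        _ ≤ r*G + r*G := add_le_add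
            (by rw [abs_mul, abs_of_pos hrpos]; exact mul_le_mul_of_nonneg_left ha hr0) hxb
        _ = 2*(r*G) := by ring
    have hww' : |w*w'| ≤ (r*G)*Ns := abs_mul_le' hw hNswp
    have hE : 2*(r^2 * |Q|) ≤ 2*(r*(Nf*G' + 2*(G*Ns))) := by
      have h0 : 2*(r^2 * |Q|) = |2*(r^2*Q)| := by
        rw [abs_mul, abs_mul, abs_of_pos (pow_pos hrpos 2)]; norm_num
      rw [h0, hid]
      have tri := abs3 ((r*a + xb)*(r*A - xB)) ((r*a - xb)*(r*A + xB)) (2*(w*w'))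
      have b1' : |(r*a + xb)*(r*A - xB)| ≤ Nf*(2*(r*G')) := abs_mul_le' hgood hminus'
      have b2' : |(r*a - xb)*(r*A + xB)| ≤ (2*(r*G))*Ns := abs_mul_le' hminus hgood'
      have b3' : |2*(w*w')| ≤ 2*((r*G)*Ns) := by
        rw [abs_mul]; norm_num; rw [← abs_mul]; exact hww'
      linarith [tri, b1', b2', b3']
    have h4r : |Q| * Jp ≤ |Q| * (4*r) := mul_le_mul_of_nonneg_left hJp4 (abs_nonneg _)
    have hQr : r*|Q| ≤ Nf*G' + 2*(G*Ns) := by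
      have h := hE
      rw [show 2*(r^2*|Q|) = r*(2*(r*|Q|)) by ring,
          show 2*(r*(Nf*G' + 2*(G*Ns))) = r*(2*(Nf*G' + 2*(G*Ns))) by ring] at h
      have := le_of_mul_le_mul_left h hrpos
      linarith
    linarith [h4r, hQr]

lemma jb_one_le (y : ℝ) : 1 ≤ jb y := by
  calc (1:ℝ) = Real.sqrt 1 := Real.sqrt_one.symm
    _ ≤ jb y := Real.sqrt_le_sqrt (by nlinarith [sq_nonneg y])

lemma abs_le_jb (y : ℝ) : |y| ≤ jb y := by
  rw [jb, ← Real.sqrt_sq_eq_abs]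
  exact Real.sqrt_le_sqrt (by linarith)

lemma jb_le (y : ℝ) : jb y ≤ 1 + |y| := by
  have h : 1 + y^2 ≤ (1+|y|)^2 := by nlinarith [abs_nonneg y, sq_abs y]
  calc jb y ≤ Real.sqrt ((1+|y|)^2) := Real.sqrt_le_sqrt h
    _ = 1+|y| := Real.sqrt_sq (by positivity)

lemma jb_pos (y : ℝ) : 0 < jb y := lt_of_lt_of_le one_pos (jb_one_le y)

/-- Null form estimate: |Q₀(φ,ψ)| ≤ C⟨t+|x|⟩^{-1}([φ]₁|∂ψ| + |∂φ|[ψ]₁). -/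
theorem null_form_estimate :
    ∃ C > 0, ∀ φ ψ : ℝ → ℝ → ℝ → ℝ,
      ContDiffOn ℝ (⊤ : ℕ∞) (fun p : ℝ × ℝ × ℝ => φ p.1 p.2.1 p.2.2) {p : ℝ × ℝ × ℝ | 0 < p.1} →
      ContDiffOn ℝ (⊤ : ℕ∞) (fun p : ℝ × ℝ × ℝ => ψ p.1 p.2.1 p.2.2) {p : ℝ × ℝ × ℝ | 0 < p.1} →
      ∀ t x1 x2 : ℝ, 0 < t →
        |Q0 φ ψ t x1 x2| ≤ C * (jb (t + rr x1 x2))⁻¹ *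
          (bracket1 φ t x1 x2 * gradNorm ψ t x1 x2 + gradNorm φ t x1 x2 * bracket1 ψ t x1 x2) := by
  refine ⟨100, by norm_num, ?_⟩
  intro φ ψ _ _ t x1 x2 ht
  have hr2 : (rr x1 x2)^2 = x1^2 + x2^2 := Real.sq_sqrt (by positivity)
  have hr0 : 0 ≤ rr x1 x2 := Real.sqrt_nonneg _
  have hG2 : (gradNorm φ t x1 x2)^2 = dT φ t x1 x2 ^2 + d1 φ t x1 x2 ^2 + d2 φ t x1 x2 ^2 :=
    Real.sq_sqrt (by positivity)
  have hG0 : 0 ≤ gradNorm φ t x1 x2 := Real.sqrt_nonneg _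
  have hG'2 : (gradNorm ψ t x1 x2)^2 = dT ψ t x1 x2 ^2 + d1 ψ t x1 x2 ^2 + d2 ψ t x1 x2 ^2 :=
    Real.sq_sqrt (by positivity)
  have hG'0 : 0 ≤ gradNorm ψ t x1 x2 := Real.sqrt_nonneg _
  have hJple : jb (t + rr x1 x2) ≤ 1 + (t + rr x1 x2) := by
    have := jb_le (t + rr x1 x2)
    rwa [abs_of_pos (by linarith)] at this
  have hkey := key t x1 x2 (dT φ t x1 x2) (d1 φ t x1 x2) (d2 φ t x1 x2)
    (dT ψ t x1 x2) (d1 ψ t x1 x2) (d2 ψ t x1 x2)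
    (rr x1 x2) (gradNorm φ t x1 x2) (gradNorm ψ t x1 x2)
    (jb (t - rr x1 x2)) (jb (t + rr x1 x2))
    (|L1 φ t x1 x2| + |L2 φ t x1 x2| + |Omg φ t x1 x2|
      + jb (t - rr x1 x2) * gradNorm φ t x1 x2)
    (|L1 ψ t x1 x2| + |L2 ψ t x1 x2| + |Omg ψ t x1 x2|
      + jb (t - rr x1 x2) * gradNorm ψ t x1 x2)
    ht hr2 hr0 hG2 hG0 hG'2 hG'0 (jb_one_le _) (abs_le_jb _) (jb_one_le _) hJple rfl rfl
  have hNfB : |L1 φ t x1 x2| + |L2 φ t x1 x2| + |Omg φ t x1 x2|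
      + jb (t - rr x1 x2) * gradNorm φ t x1 x2 ≤ bracket1 φ t x1 x2 := by
    unfold bracket1 norm1
    linarith [abs_nonneg (φ t x1 x2), abs_nonneg (dT φ t x1 x2),
      abs_nonneg (d1 φ t x1 x2), abs_nonneg (d2 φ t x1 x2)]
  have hNsB : |L1 ψ t x1 x2| + |L2 ψ t x1 x2| + |Omg ψ t x1 x2|
      + jb (t - rr x1 x2) * gradNorm ψ t x1 x2 ≤ bracket1 ψ t x1 x2 := by
    unfold bracket1 norm1
    linarith [abs_nonneg (ψ t x1 x2), abs_nonneg (dT ψ t x1 x2),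
      abs_nonneg (d1 ψ t x1 x2), abs_nonneg (d2 ψ t x1 x2)]
  have hmono : 100 * ((|L1 φ t x1 x2| + |L2 φ t x1 x2| + |Omg φ t x1 x2|
        + jb (t - rr x1 x2) * gradNorm φ t x1 x2) * gradNorm ψ t x1 x2
      + gradNorm φ t x1 x2 * (|L1 ψ t x1 x2| + |L2 ψ t x1 x2| + |Omg ψ t x1 x2|
        + jb (t - rr x1 x2) * gradNorm ψ t x1 x2))
      ≤ 100 * (bracket1 φ t x1 x2 * gradNorm ψ t x1 x2
        + gradNorm φ t x1 x2 * bracket1 ψ t x1 x2) := by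
    have h1 := mul_le_mul_of_nonneg_right hNfB hG'0
    have h2 := mul_le_mul_of_nonneg_left hNsB hG0
    linarith
  have hQ0 : |Q0 φ ψ t x1 x2| * jb (t + rr x1 x2)
      ≤ 100 * (bracket1 φ t x1 x2 * gradNorm ψ t x1 x2
        + gradNorm φ t x1 x2 * bracket1 ψ t x1 x2) := by
    refine le_trans ?_ (le_trans hkey hmono)
    apply le_of_eq
    congr 1
  have hJp0 := jb_pos (t + rr x1 x2)
  rw [show (100:ℝ) * (jb (t + rr x1 x2))⁻¹ *
      (bracket1 φ t x1 x2 * gradNorm ψ t x1 x2 + gradNorm φ t x1 x2 * bracket1 ψ t x1 x2)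
    = (100 * (bracket1 φ t x1 x2 * gradNorm ψ t x1 x2
        + gradNorm φ t x1 x2 * bracket1 ψ t x1 x2)) / jb (t + rr x1 x2) by ring]
  exact (le_div_iff₀ hJp0).mpr hQ0
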